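/- Let d ≥ 1 and equip ℝ^d with the ℓ¹ norm; let 0 < p ≤ 1. With r : [0,1]^d → F_p({0,1}^d) the coordinatewise multilinear interpolation r(x) = ∑_{v∈{0,1}^d} x^{(v)} δ(v), for all x, y ∈ [0,1]^d we have ‖r(x) - r(y)‖_p ≤ 2^{(d-1)(1/p-1)} · d^{1/p-1} · |x - y|₁. -/

import Mathlib

/-- The ℓ¹ distance on ℝ^d. -/
noncomputable def l1dist {d : ℕ} (x y : Fin d → ℝ) : ℝ := ∑ i, |x i - y i|

/-- A vertex of the cube {0,1}^d viewed as a point of ℝ^d. -/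
def vert {d : ℕ} (v : Fin d → Bool) : Fin d → ℝ := fun i => if v i then 1 else 0

/-- An elementary molecule (δ(x) - δ(y))/|x - y|₁ over the vertex set {0,1}^d,
modelled as a function on the vertices (δ(z) being modelled as χ_z - χ_basepoint,
so that the basepoint contributions cancel). -/
noncomputable def mol {d : ℕ} (x y : Fin d → Bool) : (Fin d → Bool) → ℝ :=
  fun w => ((if w = x then (1 : ℝ) else 0) - (if w = y then 1 else 0)) /
    l1dist (vert x) (vert y)

/-- δ(v) in the Lipschitz free p-space over ({0,1}^d, ℓ¹) with basepoint 0,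
modelled as χ_v - χ_0. -/
noncomputable def deltaV {d : ℕ} (v : Fin d → Bool) : (Fin d → Bool) → ℝ :=
  fun w => (if w = v then (1 : ℝ) else 0) - (if w = (fun _ => false) then 1 else 0)

/-- The set of values (∑ |aᵢ|^p)^{1/p} over all molecular decompositions of m;
the free p-space norm of m is its infimum. -/
noncomputable def pNormSet (p : ℝ) {d : ℕ} (m : (Fin d → Bool) → ℝ) : Set ℝ :=
  {c | ∃ (n : ℕ) (a : Fin n → ℝ) (x y : Fin n → (Fin d → Bool)),
    (∀ i, x i ≠ y i) ∧ m = (∑ i, a i • mol (x i) (y i)) ∧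
    c = (∑ i, |a i| ^ p) ^ (1 / p)}

/-- Multilinear interpolation coefficient x^{(v)} = ∏ᵢ xᵢ^{(vᵢ)}. -/
noncomputable def coeffR {d : ℕ} (x : Fin d → ℝ) (v : Fin d → Bool) : ℝ :=
  ∏ i, (if v i then x i else 1 - x i)

/-- The canonical coordinatewise affine retraction r(x) = ∑_v x^{(v)} δ(v). -/
noncomputable def rMap {d : ℕ} (x : Fin d → ℝ) : (Fin d → Bool) → ℝ :=
  ∑ v : Fin d → Bool, coeffR x v • deltaV v

-- erase-k product
noncomputable def Pk {d : ℕ} (z : Fin d → ℝ) (k : Fin d) (v : Fin d → Bool) : ℝ :=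
  ∏ i ∈ Finset.univ.erase k, (if v i then z i else 1 - z i)

lemma coeffR_split {d : ℕ} (z : Fin d → ℝ) (k : Fin d) (v : Fin d → Bool) :
    coeffR z v = (if v k then z k else 1 - z k) * Pk z k v := by
  rw [coeffR, Pk, ← Finset.mul_prod_erase Finset.univ _ (Finset.mem_univ k)]

lemma Pk_update {d : ℕ} (z : Fin d → ℝ) (k : Fin d) (v : Fin d → Bool) (b : Bool) :
    Pk z k (Function.update v k b) = Pk z k v := by
  refine Finset.prod_congr rfl fun i hi => ?_
  rw [Function.update_of_ne (Finset.ne_of_mem_erase hi)]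

lemma Pk_congr {d : ℕ} {z z' : Fin d → ℝ} (k : Fin d) (h : ∀ i, i ≠ k → z i = z' i)
    (v : Fin d → Bool) : Pk z k v = Pk z' k v := by
  refine Finset.prod_congr rfl fun i hi => ?_
  rw [h i (Finset.ne_of_mem_erase hi)]

lemma sum_coeffR {d : ℕ} (u : Fin d → ℝ) : ∑ v : Fin d → Bool, coeffR u v = 1 := by
  have h := Fintype.prod_sum (fun (i : Fin d) (b : Bool) => if b then u i else 1 - u i)
  simp only [Fintype.sum_bool, reduceIte] at h
  calc ∑ v : Fin d → Bool, coeffR u v = ∏ x : Fin d, (u x + (1 - u x)) := h.symm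
    _ = 1 := by simp

lemma mol_adjacent {d : ℕ} (k : Fin d) (v : Fin d → Bool) :
    mol (Function.update v k true) (Function.update v k false)
      = deltaV (Function.update v k true) - deltaV (Function.update v k false) := by
  have hl : l1dist (vert (Function.update v k true)) (vert (Function.update v k false)) = 1 := by
    rw [l1dist, Finset.sum_eq_single_of_mem k (Finset.mem_univ k)]
    · simp [vert, Function.update_self]
    · intro i _ hik
      simp [vert, Function.update_of_ne hik]
  funext w
  simp only [mol, deltaV, hl, div_one, Pi.sub_apply]
  ring

lemma single_step {d : ℕ} (z z' : Fin d → ℝ) (k : Fin d) (h : ∀ i, i ≠ k → z i = z' i) :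
    rMap z - rMap z' = ∑ v : Fin d → Bool,
      (if v k then 0 else (z k - z' k) * Pk z k v) •
        mol (Function.update v k true) (Function.update v k false) := by
  have hσ : Function.Involutive (fun v : Fin d → Bool => Function.update v k (! v k)) := by
    intro v
    simp [Function.update_idem]
  have e2 : ∀ v : Fin d → Bool, ¬ (v k = true) → Function.update v k false = v := by
    intro v hv
    have hb : v k = false := by simpa using hv
    conv_lhs => rw [← hb]
    exact Function.update_eq_self k v
  have e3 : ∀ v : Fin d → Bool, v k = true → Function.update v k true = v := by
    intro v hv
    conv_lhs => rw [← hv]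
    exact Function.update_eq_self k v
  have e1 : rMap z - rMap z' = ∑ v : Fin d → Bool, (coeffR z v - coeffR z' v) • deltaV v := by
    rw [rMap, rMap, ← Finset.sum_sub_distrib]
    exact Finset.sum_congr rfl fun v _ => (sub_smul _ _ _).symm
  have rhs2 : ∑ v : Fin d → Bool,
      (if v k then (0:ℝ) else (z k - z' k) * Pk z k v) • deltaV (Function.update v k false)
      = ∑ v : Fin d → Bool,
        (if v k then 0 else ((z k - z' k) * Pk z k v) • deltaV v) := by
    refine Finset.sum_congr rfl fun v _ => ?_
    by_cases hv : v k = true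
    · simp [hv]
    · simp [hv, e2 v hv]
  have rhs1 : ∑ v : Fin d → Bool,
      (if v k then (0:ℝ) else (z k - z' k) * Pk z k v) • deltaV (Function.update v k true)
      = ∑ v : Fin d → Bool,
        (if v k then ((z k - z' k) * Pk z k v) • deltaV v else 0) := by
    rw [← Equiv.sum_comp (Function.Involutive.toPerm _ hσ)
      (fun v : Fin d → Bool => (if v k then (0:ℝ) else (z k - z' k) * Pk z k v) •
        deltaV (Function.update v k true))]
    refine Finset.sum_congr rfl fun v _ => ?_
    simp only [Function.Involutive.coe_toPerm]
    by_cases hv : v k = true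
    · simp [hv, Function.update_self, Function.update_idem, Pk_update, e3 v hv]
    · simp [hv, Function.update_self]
  calc rMap z - rMap z'
      = ∑ v : Fin d → Bool, (coeffR z v - coeffR z' v) • deltaV v := e1
    _ = ∑ v : Fin d → Bool,
        ((if v k then ((z k - z' k) * Pk z k v) • deltaV v else 0)
          - (if v k then 0 else ((z k - z' k) * Pk z k v) • deltaV v)) := by
        refine Finset.sum_congr rfl fun v _ => ?_
        have hP : Pk z' k v = Pk z k v := (Pk_congr k h v).symm
        by_cases hv : v k = true
        · have hc : coeffR z v - coeffR z' v = (z k - z' k) * Pk z k v := by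
            rw [coeffR_split, coeffR_split, hP, hv]
            simp only [if_true]
            ring
          rw [hc]
          simp [hv]
        · have hc : coeffR z v - coeffR z' v = -((z k - z' k) * Pk z k v) := by
            rw [coeffR_split, coeffR_split, hP, if_neg hv, if_neg hv]
            ring
          rw [hc]
          simp [hv, neg_smul]
    _ = ∑ v : Fin d → Bool,
        (if v k then ((z k - z' k) * Pk z k v) • deltaV v else 0)
        - ∑ v : Fin d → Bool,
        (if v k then 0 else ((z k - z' k) * Pk z k v) • deltaV v) := Finset.sum_sub_distrib _ _
    _ = ∑ v : Fin d → Bool,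
        (if v k then (0:ℝ) else (z k - z' k) * Pk z k v) • deltaV (Function.update v k true)
        - ∑ v : Fin d → Bool,
        (if v k then (0:ℝ) else (z k - z' k) * Pk z k v) • deltaV (Function.update v k false) := by
        rw [rhs1, rhs2]
    _ = ∑ v : Fin d → Bool,
        (if v k then (0:ℝ) else (z k - z' k) * Pk z k v) •
          (deltaV (Function.update v k true) - deltaV (Function.update v k false)) := by
        rw [← Finset.sum_sub_distrib]
        exact Finset.sum_congr rfl fun v _ => (smul_sub _ _ _).symm
    _ = ∑ v : Fin d → Bool,
        (if v k then 0 else (z k - z' k) * Pk z k v) •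
          mol (Function.update v k true) (Function.update v k false) := by
        refine Finset.sum_congr rfl fun v _ => ?_
        rw [mol_adjacent]

lemma holder_p {ι : Type*} (s : Finset ι) (f : ι → ℝ) (hf : ∀ i ∈ s, 0 ≤ f i)
    {p : ℝ} (hp0 : 0 < p) (hp1 : p ≤ 1) :
    ∑ i ∈ s, f i ^ p ≤ (s.card : ℝ) ^ (1 - p) * (∑ i ∈ s, f i) ^ p := by
  rcases s.eq_empty_or_nonempty with rfl | hs
  · simp [Real.zero_rpow hp0.ne']
  · have hN : (0:ℝ) < s.card := by exact_mod_cast hs.card_pos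
    have hinv : (1:ℝ) ≤ 1 / p := by
      rw [le_div_iff₀ hp0]; linarith
    have h1 : ∀ i ∈ s, (f i ^ p) ^ (1/p) = f i := by
      intro i hi
      rw [← Real.rpow_mul (hf i hi), mul_one_div, div_self hp0.ne', Real.rpow_one]
    have key := Real.arith_mean_le_rpow_mean s (fun _ => ((s.card:ℝ))⁻¹)
      (fun i => f i ^ p) (fun i _ => by positivity)
      (by rw [Finset.sum_const, nsmul_eq_mul, mul_inv_cancel₀ hN.ne'])
      (fun i hi => Real.rpow_nonneg (hf i hi) p) hinv
    have key2 : (s.card:ℝ)⁻¹ * ∑ i ∈ s, f i ^ p ≤ ((s.card:ℝ)⁻¹ * ∑ i ∈ s, f i) ^ p := by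
      calc (s.card:ℝ)⁻¹ * ∑ i ∈ s, f i ^ p
          = ∑ i ∈ s, (s.card:ℝ)⁻¹ * f i ^ p := Finset.mul_sum _ _ _
        _ ≤ (∑ i ∈ s, (s.card:ℝ)⁻¹ * (f i ^ p) ^ (1/p)) ^ (1/(1/p)) := key
        _ = ((s.card:ℝ)⁻¹ * ∑ i ∈ s, f i) ^ p := by
            rw [one_div_one_div]
            congr 1
            rw [Finset.mul_sum]
            exact Finset.sum_congr rfl fun i hi => by rw [h1 i hi]
    have hmul : ((s.card:ℝ)⁻¹ * ∑ i ∈ s, f i) ^ p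
        = ((s.card:ℝ)⁻¹) ^ p * (∑ i ∈ s, f i) ^ p :=
      Real.mul_rpow (by positivity) (Finset.sum_nonneg hf)
    have hpow : (s.card:ℝ) * ((s.card:ℝ)⁻¹) ^ p = (s.card:ℝ) ^ (1 - p) := by
      rw [Real.inv_rpow hN.le, Real.rpow_sub hN, Real.rpow_one, div_eq_mul_inv]
    calc ∑ i ∈ s, f i ^ p
        = (s.card:ℝ) * ((s.card:ℝ)⁻¹ * ∑ i ∈ s, f i ^ p) := by
          field_simp
      _ ≤ (s.card:ℝ) * (((s.card:ℝ)⁻¹ * ∑ i ∈ s, f i) ^ p) :=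
          mul_le_mul_of_nonneg_left key2 hN.le
      _ = (s.card:ℝ) ^ (1 - p) * (∑ i ∈ s, f i) ^ p := by
          rw [hmul, ← mul_assoc, hpow]

lemma card_filter_false {d : ℕ} (hd : 1 ≤ d) (k : Fin d) :
    ((Finset.univ : Finset (Fin d → Bool)).filter (fun v => v k = false)).card
      = 2 ^ (d - 1) := by
  classical
  have hbij : ((Finset.univ : Finset (Fin d → Bool)).filter (fun v => v k = false)).card
      = ((Finset.univ : Finset (Fin d → Bool)).filter (fun v => v k = true)).card := by
    refine Finset.card_bij' (fun v _ => Function.update v k true)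
      (fun v _ => Function.update v k false) ?_ ?_ ?_ ?_
    · intro v hv
      simp [Function.update_self]
    · intro v hv
      simp [Function.update_self]
    · intro v hv
      simp only [Finset.mem_filter] at hv
      show Function.update (Function.update v k true) k false = v
      rw [Function.update_idem, ← hv.2]
      exact Function.update_eq_self k v
    · intro v hv
      simp only [Finset.mem_filter] at hv
      show Function.update (Function.update v k false) k true = v
      rw [Function.update_idem, ← hv.2]
      exact Function.update_eq_self k v
  have hsum : ((Finset.univ : Finset (Fin d → Bool)).filter (fun v => v k = false)).card
      + ((Finset.univ : Finset (Fin d → Bool)).filter (fun v => v k = true)).card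
      = 2 ^ d := by
    have h := Finset.card_filter_add_card_filter_not
      (s := (Finset.univ : Finset (Fin d → Bool))) (fun v => v k = false)
    have hcongr : (Finset.univ : Finset (Fin d → Bool)).filter (fun v => ¬ (v k = false))
        = (Finset.univ : Finset (Fin d → Bool)).filter (fun v => v k = true) := by
      apply Finset.filter_congr
      intro v _
      simp
    rw [hcongr] at h
    rw [h]
    simp [Fintype.card_fun]
  have h2 : (2:ℕ) ^ d = 2 * 2 ^ (d - 1) := by
    calc (2:ℕ) ^ d = 2 ^ ((d-1)+1) := by rw [Nat.sub_add_cancel hd]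
      _ = 2 * 2 ^ (d-1) := by rw [pow_succ, mul_comm]
  rw [hbij]
  rw [hbij, h2, ← two_mul] at hsum
  exact Nat.eq_of_mul_eq_mul_left (by norm_num) hsum

lemma sum_filter_Pk {d : ℕ} (u : Fin d → ℝ) (k : Fin d) :
    ∑ v ∈ ((Finset.univ : Finset (Fin d → Bool)).filter (fun v => v k = false)),
      Pk u k v = 1 := by
  classical
  have h := sum_coeffR (Function.update u k 0)
  rw [← h, Finset.sum_filter]
  refine Finset.sum_congr rfl fun v _ => ?_
  have hP : Pk u k v = Pk (Function.update u k 0) k v :=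
    Pk_congr k (fun i hik => (Function.update_of_ne hik 0 u).symm) v
  rw [coeffR_split]
  by_cases hv : v k = true
  · rw [if_neg (by simp [hv]), hv, if_pos rfl, Function.update_self]
    ring
  · have hb : v k = false := by simpa using hv
    rw [if_pos hb, hb, if_neg (by simp), Function.update_self, hP]
    ring

noncomputable def wPath {d : ℕ} (x y : Fin d → ℝ) (j : ℕ) : Fin d → ℝ :=
  fun i => if (i:ℕ) < j then y i else x i

noncomputable def Acoef {d : ℕ} (x y : Fin d → ℝ) (k : Fin d) (v : Fin d → Bool) : ℝ :=
  if v k then 0 else (x k - y k) * Pk (wPath x y k) k v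

lemma step_decomp {d : ℕ} (x y : Fin d → ℝ) (k : Fin d) :
    rMap (wPath x y (k:ℕ)) - rMap (wPath x y ((k:ℕ)+1))
      = ∑ v : Fin d → Bool, Acoef x y k v •
          mol (Function.update v k true) (Function.update v k false) := by
  have hagree : ∀ i : Fin d, i ≠ k → wPath x y (k:ℕ) i = wPath x y ((k:ℕ)+1) i := by
    intro i hik
    have hne : (i:ℕ) ≠ (k:ℕ) := fun hc => hik (Fin.ext hc)
    unfold wPath
    by_cases hlt : (i:ℕ) < (k:ℕ)
    · rw [if_pos hlt, if_pos (by omega)]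
    · rw [if_neg hlt, if_neg (by omega)]
  rw [single_step _ _ k hagree]
  refine Finset.sum_congr rfl fun v _ => ?_
  have hk1 : wPath x y (k:ℕ) k = x k := if_neg (lt_irrefl _)
  have hk2 : wPath x y ((k:ℕ)+1) k = y k := if_pos (Nat.lt_succ_self _)
  simp only [Acoef, hk1, hk2]

lemma telescope {d : ℕ} (x y : Fin d → ℝ) :
    rMap x - rMap y
      = ∑ k : Fin d, (rMap (wPath x y (k:ℕ)) - rMap (wPath x y ((k:ℕ)+1))) := by
  have h0 : wPath x y 0 = x := by
    funext i; simp [wPath]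
  have hdd : wPath x y d = y := by
    funext i; simp [wPath, i.isLt]
  rw [Fin.sum_univ_eq_sum_range (fun j => rMap (wPath x y j) - rMap (wPath x y (j+1))) d]
  rw [Finset.sum_range_sub' (fun j => rMap (wPath x y j)) d]
  rw [h0, hdd]

lemma block_bound {d : ℕ} (hd : 1 ≤ d) {p : ℝ} (hp0 : 0 < p) (hp1 : p ≤ 1)
    (x y : Fin d → ℝ) (hx : ∀ i, x i ∈ Set.Icc (0:ℝ) 1) (hy : ∀ i, y i ∈ Set.Icc (0:ℝ) 1)
    (k : Fin d) :
    ∑ v : Fin d → Bool, |Acoef x y k v| ^ p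
      ≤ ((2:ℝ) ^ (d-1 : ℕ)) ^ (1-p) * |x k - y k| ^ p := by
  classical
  have hw : ∀ i, wPath x y (k:ℕ) i ∈ Set.Icc (0:ℝ) 1 := by
    intro i; unfold wPath
    by_cases h : (i:ℕ) < (k:ℕ)
    · rw [if_pos h]; exact hy i
    · rw [if_neg h]; exact hx i
  have hPnn : ∀ v, 0 ≤ Pk (wPath x y (k:ℕ)) k v := by
    intro v
    refine Finset.prod_nonneg fun i _ => ?_
    by_cases hv : v i = true
    · rw [if_pos hv]; exact (hw i).1
    · rw [if_neg hv]; linarith [(hw i).2]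
  have e1 : ∑ v : Fin d → Bool, |Acoef x y k v| ^ p
      = ∑ v ∈ Finset.univ.filter (fun v : Fin d → Bool => v k = false),
          |x k - y k| ^ p * Pk (wPath x y (k:ℕ)) k v ^ p := by
    rw [Finset.sum_filter]
    refine Finset.sum_congr rfl fun v _ => ?_
    simp only [Acoef]
    by_cases hv : v k = true
    · rw [if_pos hv, if_neg (by simp [hv]), abs_zero, Real.zero_rpow hp0.ne']
    · have hb : v k = false := by simpa using hv
      rw [if_neg hv, if_pos hb, abs_mul, abs_of_nonneg (hPnn v),
        Real.mul_rpow (abs_nonneg _) (hPnn v)]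
  rw [e1, ← Finset.mul_sum]
  have hH := holder_p (Finset.univ.filter (fun v : Fin d → Bool => v k = false))
      (fun v => Pk (wPath x y (k:ℕ)) k v) (fun v _ => hPnn v) hp0 hp1
  rw [sum_filter_Pk, card_filter_false hd k, Real.one_rpow, mul_one] at hH
  refine le_trans (mul_le_mul_of_nonneg_left hH (Real.rpow_nonneg (abs_nonneg _) p)) ?_
  apply le_of_eq
  push_cast
  ring

set_option maxHeartbeats 1000000 in
theorem stmt16 (d : ℕ) (hd : 1 ≤ d) (p : ℝ) (hp0 : 0 < p) (hp1 : p ≤ 1)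
    (x y : Fin d → ℝ)
    (hx : ∀ i, x i ∈ Set.Icc (0 : ℝ) 1) (hy : ∀ i, y i ∈ Set.Icc (0 : ℝ) 1) :
    sInf (pNormSet p (rMap x - rMap y)) ≤
      ((2 : ℝ) ^ ((d : ℝ) - 1)) ^ (1 / p - 1) * (d : ℝ) ^ (1 / p - 1) * l1dist x y := by
  classical
  set n := Fintype.card (Fin d × (Fin d → Bool)) with hn
  set e : Fin n ≃ Fin d × (Fin d → Bool) :=
    (Fintype.equivFin (Fin d × (Fin d → Bool))).symm with he
  set g : Fin d × (Fin d → Bool) → (Fin d → Bool) → ℝ :=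
    fun j => Acoef x y j.1 j.2 •
      mol (Function.update j.2 j.1 true) (Function.update j.2 j.1 false) with hg
  have hdecomp : rMap x - rMap y = ∑ i : Fin n, g (e i) := by
    calc rMap x - rMap y
        = ∑ k : Fin d, (rMap (wPath x y (k:ℕ)) - rMap (wPath x y ((k:ℕ)+1))) :=
          telescope x y
      _ = ∑ k : Fin d, ∑ v : Fin d → Bool, Acoef x y k v •
            mol (Function.update v k true) (Function.update v k false) :=
          Finset.sum_congr rfl fun k _ => step_decomp x y k
      _ = ∑ j : Fin d × (Fin d → Bool), g j := by
          rw [Fintype.sum_prod_type g]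
      _ = ∑ i : Fin n, g (e i) := (Equiv.sum_comp e g).symm
  set c := (∑ i : Fin n, |Acoef x y (e i).1 (e i).2| ^ p) ^ (1/p) with hc
  have hmem : c ∈ pNormSet p (rMap x - rMap y) := by
    refine ⟨n, fun i => Acoef x y (e i).1 (e i).2,
      fun i => Function.update (e i).2 (e i).1 true,
      fun i => Function.update (e i).2 (e i).1 false, ?_, hdecomp, rfl⟩
    intro i hEq
    have h := congrFun hEq (e i).1
    simp [Function.update_self] at h
  have hbdd : BddBelow (pNormSet p (rMap x - rMap y)) := by
    refine ⟨0, fun cc hcc => ?_⟩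
    obtain ⟨m, a, xx, yy, -, -, rfl⟩ := hcc
    exact Real.rpow_nonneg
      (Finset.sum_nonneg fun i _ => Real.rpow_nonneg (abs_nonneg _) _) _
  refine le_trans (csInf_le hbdd hmem) ?_
  have hsum : ∑ i : Fin n, |Acoef x y (e i).1 (e i).2| ^ p
      = ∑ k : Fin d, ∑ v : Fin d → Bool, |Acoef x y k v| ^ p := by
    have h1 : ∑ j : Fin d × (Fin d → Bool), |Acoef x y j.1 j.2| ^ p
        = ∑ k : Fin d, ∑ v : Fin d → Bool, |Acoef x y k v| ^ p := by
      rw [Fintype.sum_prod_type (fun j : Fin d × (Fin d → Bool) => |Acoef x y j.1 j.2| ^ p)]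
    rw [← h1]
    exact Equiv.sum_comp e (fun j : Fin d × (Fin d → Bool) => |Acoef x y j.1 j.2| ^ p)
  have hL : 0 ≤ l1dist x y := Finset.sum_nonneg fun i _ => abs_nonneg _
  have hblocks : ∑ k : Fin d, ∑ v : Fin d → Bool, |Acoef x y k v| ^ p
      ≤ ((2:ℝ)^(d-1:ℕ))^(1-p) * ((d:ℝ)^(1-p) * (l1dist x y)^p) := by
    calc ∑ k : Fin d, ∑ v : Fin d → Bool, |Acoef x y k v| ^ p
        ≤ ∑ k : Fin d, ((2:ℝ)^(d-1:ℕ))^(1-p) * |x k - y k|^p :=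
          Finset.sum_le_sum fun k _ => block_bound hd hp0 hp1 x y hx hy k
      _ = ((2:ℝ)^(d-1:ℕ))^(1-p) * ∑ k : Fin d, |x k - y k|^p :=
          (Finset.mul_sum _ _ _).symm
      _ ≤ ((2:ℝ)^(d-1:ℕ))^(1-p) * ((d:ℝ)^(1-p) * (l1dist x y)^p) := by
          refine mul_le_mul_of_nonneg_left ?_ (Real.rpow_nonneg (by positivity) _)
          have hH := holder_p Finset.univ (fun k : Fin d => |x k - y k|)
            (fun k _ => abs_nonneg _) hp0 hp1
          simpa [l1dist, Finset.card_univ] using hH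
  have h1p : (0:ℝ) ≤ 1/p := by positivity
  rw [hc, hsum]
  calc (∑ k : Fin d, ∑ v : Fin d → Bool, |Acoef x y k v| ^ p) ^ (1/p)
      ≤ (((2:ℝ)^(d-1:ℕ))^(1-p) * ((d:ℝ)^(1-p) * (l1dist x y)^p)) ^ (1/p) :=
        Real.rpow_le_rpow
          (Finset.sum_nonneg fun k _ => Finset.sum_nonneg fun v _ =>
            Real.rpow_nonneg (abs_nonneg _) _) hblocks h1p
    _ = ((2 : ℝ) ^ ((d : ℝ) - 1)) ^ (1 / p - 1) * (d : ℝ) ^ (1 / p - 1) * l1dist x y := by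
        have hq : (1-p) * (1/p) = 1/p - 1 := by field_simp
        have hq2 : p * (1/p) = 1 := by field_simp
        have h2m : ((2:ℝ)^(d-1:ℕ)) = (2:ℝ) ^ ((d:ℝ)-1) := by
          rw [← Real.rpow_natCast 2 (d-1)]
          congr 1
          push_cast [Nat.cast_sub hd]
          ring
        rw [Real.mul_rpow (by positivity) (by positivity),
            Real.mul_rpow (by positivity) (Real.rpow_nonneg hL p),
            ← Real.rpow_mul (by positivity : (0:ℝ) ≤ (2:ℝ)^(d-1:ℕ)),
            ← Real.rpow_mul (by positivity : (0:ℝ) ≤ (d:ℝ)),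
            ← Real.rpow_mul hL, hq, hq2, Real.rpow_one, h2m]
        ring
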